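/- For every natural number n ≥ 1 and every real φ such that φ + πl/n is not an integer multiple of π for any l = 0,...,n-1, one has ∑_{l=0}^{n-1} cot(φ + πl/n) = n·cot(nφ). -/

import Mathlib

open Real Finset

lemma prod_poly (n : ℕ) (hn : 0 < n) {ζ : ℂ} (hζ : IsPrimitiveRoot ζ n) :
    ∏ l ∈ range n, (Polynomial.X - Polynomial.C (ζ ^ l)) = Polynomial.X ^ n - 1 := by
  rw [Polynomial.X_pow_sub_one_eq_prod hn hζ]
  have : NeZero n := ⟨hn.ne'⟩
  refine Finset.prod_bij (fun l _ => ζ ^ l) ?_ ?_ ?_ (fun _ _ => rfl)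
  · intro l hl
    exact (Polynomial.mem_nthRootsFinset hn 1).2
      (by rw [← pow_mul, mul_comm, pow_mul, hζ.pow_eq_one, one_pow])
  · intro a ha b hb hab
    exact hζ.pow_inj (mem_range.1 ha) (mem_range.1 hb) hab
  · intro x hx
    obtain ⟨i, hi, rfl⟩ := hζ.eq_pow_of_pow_eq_one ((Polynomial.mem_nthRootsFinset hn 1).1 hx)
    exact ⟨i, mem_range.2 hi, rfl⟩

lemma prod_eval (n : ℕ) (hn : 0 < n) {ζ : ℂ} (hζ : IsPrimitiveRoot ζ n) (z : ℂ) :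
    ∏ l ∈ range n, (z - ζ ^ l) = z ^ n - 1 := by
  have h := congrArg (Polynomial.eval z) (prod_poly n hn hζ)
  simpa [Polynomial.eval_prod] using h

lemma deriv_eval (n : ℕ) (hn : 0 < n) {ζ : ℂ} (hζ : IsPrimitiveRoot ζ n) (z : ℂ) :
    ∑ l ∈ range n, ∏ j ∈ (range n).erase l, (z - ζ ^ j) = n * z ^ (n - 1) := by
  have h := congrArg (fun p => Polynomial.eval z (Polynomial.derivative p)) (prod_poly n hn hζ)
  simp only [Polynomial.derivative_sub, Polynomial.derivative_one, Polynomial.derivative_X_pow,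
    sub_zero, Polynomial.eval_mul, Polynomial.eval_C, Polynomial.eval_pow, Polynomial.eval_X] at h
  rw [← h, Finset.prod_eq_multiset_prod, Polynomial.derivative_prod,
    ← Finset.sum_eq_multiset_sum, Polynomial.eval_finset_sum]
  refine Finset.sum_congr rfl fun l hl => ?_
  simp only [Polynomial.derivative_sub, Polynomial.derivative_X, Polynomial.derivative_C,
    sub_zero, mul_one, ← Finset.range_val, ← Finset.erase_val,
    ← Finset.prod_eq_multiset_prod, Polynomial.eval_prod, Polynomial.eval_sub,
    Polynomial.eval_X, Polynomial.eval_C]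

lemma sum_inv (n : ℕ) (hn : 0 < n) {ζ z : ℂ} (hζ : IsPrimitiveRoot ζ n) (hz : z ^ n ≠ 1) :
    ∑ l ∈ range n, 1 / (z - ζ ^ l) = n * z ^ (n - 1) / (z ^ n - 1) := by
  have hprod := prod_eval n hn hζ z
  have hne : ∀ l ∈ range n, z - ζ ^ l ≠ 0 := by
    intro l _ h0
    apply hz
    rw [sub_eq_zero.1 h0, ← pow_mul, mul_comm, pow_mul, hζ.pow_eq_one, one_pow]
  rw [eq_div_iff (sub_ne_zero.2 hz), Finset.sum_mul, ← deriv_eval n hn hζ z]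
  refine Finset.sum_congr rfl fun l hl => ?_
  rw [← hprod, ← Finset.mul_prod_erase _ _ hl, one_div, inv_mul_cancel_left₀ (hne l hl)]

lemma sum_inv' (n : ℕ) (hn : 0 < n) {ζ z : ℂ} (hζ : IsPrimitiveRoot ζ n) (hz : z ^ n ≠ 1) :
    ∑ l ∈ range n, z / (z - ζ ^ l) = n * z ^ n / (z ^ n - 1) := by
  by_cases h0 : z = 0
  · simp [h0, zero_pow hn.ne']
  · have : ∀ l ∈ range n, z / (z - ζ ^ l) = z * (1 / (z - ζ ^ l)) := by
      intro l _; rw [mul_one_div]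
    rw [Finset.sum_congr rfl this, ← Finset.mul_sum, sum_inv n hn hζ hz,
      mul_div_assoc']
    congr 1
    rw [← mul_assoc, mul_comm z, mul_assoc, ← pow_succ']
    congr 2
    omega

lemma key (n : ℕ) (hn : 0 < n) {ζ z : ℂ} (hζ : IsPrimitiveRoot ζ n) (hz0 : z ≠ 0)
    (hne : ∀ l ∈ range n, z * ζ ^ l ≠ 1) :
    ∑ l ∈ range n, (z * ζ ^ l + 1) / (z * ζ ^ l - 1) = n * (z ^ n + 1) / (z ^ n - 1) := by
  have hzn : z ^ n ≠ 1 := by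
    intro h1
    have hp := prod_eval n hn hζ z
    rw [h1, sub_self] at hp
    obtain ⟨l, hl, h0⟩ := Finset.prod_eq_zero_iff.1 hp
    have hzl : z = ζ ^ l := sub_eq_zero.1 h0
    rcases Nat.eq_zero_or_pos l with rfl | hl0
    · exact hne 0 (Finset.mem_range.2 hn) (by simp [hzl])
    · have hln := Finset.mem_range.1 hl
      refine hne (n - l) (Finset.mem_range.2 (by omega)) ?_
      rw [hzl, ← pow_add]
      have : l + (n - l) = n := by omega
      rw [this, hζ.pow_eq_one]
  have hun : (z⁻¹) ^ n ≠ 1 := by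
    rw [inv_pow]
    intro h1
    exact hzn (by rw [← inv_inv (z ^ n), h1, inv_one])
  have hsum := sum_inv' n hn hζ hun
  have step : ∀ l ∈ range n, (z * ζ ^ l + 1) / (z * ζ ^ l - 1)
      = 1 - 2 * (z⁻¹ / (z⁻¹ - ζ ^ l)) := by
    intro l hl
    have hd : z * ζ ^ l - 1 ≠ 0 := sub_ne_zero.2 (hne l hl)
    have hd2 : z⁻¹ - ζ ^ l ≠ 0 := by
      intro h0
      apply hd
      rw [← sub_eq_zero.1 h0]
      field_simp
      simp
    have hd' : 1 - z * ζ ^ l ≠ 0 := sub_ne_zero.2 (Ne.symm (hne l hl))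
    field_simp [hd']
    ring
  rw [Finset.sum_congr rfl step, Finset.sum_sub_distrib, ← Finset.mul_sum, hsum,
    Finset.sum_const, Finset.card_range, nsmul_eq_mul, mul_one, inv_pow]
  have hw1 : z ^ n ≠ 0 := pow_ne_zero n hz0
  have hw2 : (z ^ n)⁻¹ - 1 ≠ 0 := by
    intro h0
    exact hzn (by rw [← inv_inv (z ^ n), sub_eq_zero.1 h0, inv_one])
  have hw3 : (1 : ℂ) - z ^ n ≠ 0 := sub_ne_zero.2 (Ne.symm hzn)
  have hw4 : z ^ n - 1 ≠ 0 := sub_ne_zero.2 hzn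
  field_simp [hw3, hw4]
  ring

lemma pow_ne_one (n : ℕ) (hn : 0 < n) {ζ z : ℂ} (hζ : IsPrimitiveRoot ζ n)
    (hne : ∀ l ∈ range n, z * ζ ^ l ≠ 1) : z ^ n ≠ 1 := by
  intro h1
  have hp := prod_eval n hn hζ z
  rw [h1, sub_self] at hp
  obtain ⟨l, hl, h0⟩ := Finset.prod_eq_zero_iff.1 hp
  have hzl : z = ζ ^ l := sub_eq_zero.1 h0
  rcases Nat.eq_zero_or_pos l with rfl | hl0
  · exact hne 0 (Finset.mem_range.2 hn) (by simp [hzl])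
  · have hln := Finset.mem_range.1 hl
    refine hne (n - l) (Finset.mem_range.2 (by omega)) ?_
    rw [hzl, ← pow_add]
    have : l + (n - l) = n := by omega
    rw [this, hζ.pow_eq_one]

lemma cot_formula (w : ℂ) (h : Complex.exp (2 * Complex.I * w) ≠ 1) :
    Complex.cot w = Complex.I * (Complex.exp (2 * Complex.I * w) + 1)
      / (Complex.exp (2 * Complex.I * w) - 1) := by
  have hsq : Complex.exp (2 * Complex.I * w) = Complex.exp (w * Complex.I) ^ 2 := by
    rw [← Complex.exp_nat_mul]
    congr 1
    push_cast
    ring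
  rw [hsq] at h ⊢
  have ha : Complex.exp (w * Complex.I) ≠ 0 := Complex.exp_ne_zero _
  have ha2 : Complex.exp (w * Complex.I) ^ 2 - 1 ≠ 0 := sub_ne_zero.2 h
  rw [Complex.cot, Complex.sin, Complex.cos, neg_mul, Complex.exp_neg]
  have hc : Complex.I - Complex.I * Complex.exp (w * Complex.I) ^ 2 ≠ 0 := by
    rw [← mul_one_sub]
    exact mul_ne_zero Complex.I_ne_zero (sub_ne_zero.2 (Ne.symm h))
  field_simp [hc]
  linear_combination (Complex.exp (w * Complex.I) ^ 4 - 1) * Complex.I_sq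

lemma sin_ne_of_exp (w : ℂ) (h : Complex.sin w ≠ 0) :
    Complex.exp (2 * Complex.I * w) ≠ 1 := by
  intro h1
  apply h
  have hsq : Complex.exp (w * Complex.I) ^ 2 = 1 := by
    rw [← h1, ← Complex.exp_nat_mul]
    congr 1
    push_cast
    ring
  rw [Complex.sin, neg_mul, Complex.exp_neg]
  have : (Complex.exp (w * Complex.I))⁻¹ = Complex.exp (w * Complex.I) := by
    exact inv_eq_of_mul_eq_one_right (by rw [← sq, hsq])
  rw [this, sub_self, zero_mul, zero_div]

theorem cot_sum (n : ℕ) (hn : 1 ≤ n) (φ : ℝ)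
    (h : ∀ l < n, ∀ k : ℤ, φ + π * l / n ≠ k * π) :
    ∑ l ∈ Finset.range n, Real.cot (φ + π * l / n) = n * Real.cot (n * φ) := by
  have hn0 : 0 < n := hn
  set ζ : ℂ := Complex.exp (2 * π * Complex.I / n) with hζdef
  have hζ : IsPrimitiveRoot ζ n := Complex.isPrimitiveRoot_exp n hn0.ne'
  set z : ℂ := Complex.exp (2 * Complex.I * φ) with hzdef
  have hnc : (n : ℂ) ≠ 0 := Nat.cast_ne_zero.2 hn0.ne'
  have hzζ : ∀ l ∈ range n, z * ζ ^ l
      = Complex.exp (2 * Complex.I * ((φ : ℂ) + ↑π * l / n)) := by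
    intro l _
    rw [hzdef, hζdef, ← Complex.exp_nat_mul, ← Complex.exp_add]
    congr 1
    field_simp
  have hsin : ∀ l < n, Complex.sin ((φ : ℂ) + ↑π * l / n) ≠ 0 := by
    intro l hl
    have hc : ((φ + π * l / n : ℝ) : ℂ) = (φ : ℂ) + ↑π * l / n := by push_cast; ring
    rw [← hc, ← Complex.ofReal_sin]
    simp only [ne_eq, Complex.ofReal_eq_zero]
    intro h0
    obtain ⟨k, hk⟩ := Real.sin_eq_zero_iff.1 h0
    exact h l hl k hk.symm
  have hexp : ∀ l ∈ range n, z * ζ ^ l ≠ 1 := by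
    intro l hl
    rw [hzζ l hl]
    exact sin_ne_of_exp _ (hsin l (mem_range.1 hl))
  have hzn : z ^ n = Complex.exp (2 * Complex.I * ((n : ℂ) * φ)) := by
    rw [hzdef, ← Complex.exp_nat_mul]
    congr 1
    ring
  have hzn1 : z ^ n ≠ 1 := pow_ne_one n hn0 hζ hexp
  have hkey := key n hn0 hζ (Complex.exp_ne_zero _) hexp
  have hcast : ∀ l ∈ range n, (Real.cot (φ + π * l / n) : ℂ)
      = Complex.I * ((z * ζ ^ l + 1) / (z * ζ ^ l - 1)) := by
    intro l hl
    have hc : ((φ + π * l / n : ℝ) : ℂ) = (φ : ℂ) + ↑π * l / n := by push_cast; ring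
    rw [Complex.ofReal_cot, hc, cot_formula _ (by rw [← hzζ l hl]; exact hexp l hl),
      ← hzζ l hl, mul_div_assoc]
  have hfin : (↑(∑ l ∈ range n, Real.cot (φ + π * l / n)) : ℂ)
      = ↑((n : ℝ) * Real.cot (n * φ)) := by
    rw [Complex.ofReal_sum, Finset.sum_congr rfl hcast, ← Finset.mul_sum, hkey]
    rw [Complex.ofReal_mul, Complex.ofReal_cot, Complex.ofReal_natCast]
    have hc2 : ((n * φ : ℝ) : ℂ) = (n : ℂ) * φ := by push_cast; ring
    rw [hc2, cot_formula _ (by rw [← hzn]; exact hzn1), ← hzn]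
    ring
  exact_mod_cast hfin
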